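/- arXiv:2102.07892 — 2 statements merged into one kernel-verified Lean document; each statement's English description precedes it below -/
import Mathlib

section
/- Let H be a compact subgroup of a locally compact group G with left Haar measure λ_G, and ξ a continuous character of H. For all f, g ∈ C_c(G), ⟨T_ξ(f), g⟩ = ⟨f, T_ξ(g)⟩, where ⟨u,v⟩ = ∫_G u(x) conj(v(x)) dλ_G(x). (T_ξ is formally self-adjoint.) -/
open MeasureTheory Complex Set Pointwise

/-- The covariant averaging operator `T_ξ f (x) = ∫_H f(xs) conj(ξ s) dν(s)`. -/
noncomputable def Txi {G : Type*} [Group G] [MeasurableSpace G]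
    {H : Subgroup G} (ν : Measure H) (ξ : H →* Circle) (f : G → ℂ) : G → ℂ :=
  fun x => ∫ s : H, f (x * (s : G)) * (starRingEnd ℂ) ((ξ s : ℂ)) ∂ν

section Aux

variable {G : Type*} [Group G] [TopologicalSpace G] [IsTopologicalGroup G]
    [LocallyCompactSpace G] [T2Space G] [MeasurableSpace G] [BorelSpace G]

/-- Continuity of the right-translated integral. -/
lemma continuous_integral_mul_right_aux (μ : Measure G) [IsFiniteMeasureOnCompacts μ]
    {E : Type*} [NormedAddCommGroup E] [NormedSpace ℝ E] {f : G → E}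
    (hf : Continuous f) (h'f : HasCompactSupport f) :
    Continuous (fun g ↦ ∫ x, f (x * g) ∂μ) := by
  apply continuous_iff_continuousAt.2 (fun g₀ ↦ ?_)
  obtain ⟨t, t_comp, ht⟩ : ∃ t, IsCompact t ∧ t ∈ nhds g₀ := exists_compact_mem_nhds g₀
  have A : ContinuousOn (fun g ↦ ∫ x, f (x * g) ∂μ) t := by
    apply continuousOn_integral_of_compact_support (h'f.mul t_comp.inv)
    · exact (hf.comp (continuous_snd.mul continuous_fst)).continuousOn
    · intro p x hp hx
      contrapose! hx
      refine ⟨x * p, subset_tsupport _ hx, p⁻¹, Set.inv_mem_inv.2 hp, by simp⟩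
  exact A.continuousAt ht

lemma integral_mul_right_eq_scalar (μ : Measure G) [μ.IsHaarMeasure] (g : G)
    {φ : G → ℝ} (hφ : Continuous φ) (h'φ : HasCompactSupport φ) :
    ∫ x, φ (x * g) ∂μ
      = (Measure.haarScalarFactor (μ.map (· * g)) μ : ℝ) * ∫ x, φ x ∂μ := by
  have h1 : ∫ x, φ x ∂(μ.map (· * g)) = ∫ x, φ (x * g) ∂μ :=
    integral_map (measurable_mul_const g).aemeasurable hφ.aestronglyMeasurable
  have h2 := Measure.integral_isMulLeftInvariant_eq_smul_of_hasCompactSupport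
    (μ.map (· * g)) μ hφ h'φ
  rw [integral_smul_nnreal_measure] at h2
  rw [← h1, h2, NNReal.smul_def, smul_eq_mul]

/-- Unimodularity on a compact subgroup (real version): right translation by an element of a
compact subgroup preserves integrals of continuous compactly supported functions. -/
lemma integral_mul_right_subgroup (μ : Measure G) [μ.IsHaarMeasure]
    {H : Subgroup G} [CompactSpace H]
    (ν : Measure H) [ν.IsHaarMeasure] [IsProbabilityMeasure ν] (t : H)
    {φ : G → ℝ} (hφ : Continuous φ) (h'φ : HasCompactSupport φ) :
    ∫ x, φ (x * (t : G)) ∂μ = ∫ x, φ x ∂μ := by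
  haveI : BorelSpace H := Subtype.borelSpace (H : Set G)
  set D : G → ℝ := fun g => (Measure.haarScalarFactor (μ.map (· * g)) μ : ℝ) with hD
  have key : ∀ (g : G) {ψ : G → ℝ}, Continuous ψ → HasCompactSupport ψ →
      ∫ x, ψ (x * g) ∂μ = D g * ∫ x, ψ x ∂μ :=
    fun g _ hψ h'ψ => integral_mul_right_eq_scalar μ g hψ h'ψ
  have D_pos : ∀ g, 0 < D g := fun g =>
    NNReal.coe_pos.2 (Measure.haarScalarFactor_pos_of_isHaarMeasure _ _)
  obtain ⟨⟨f₀, f₀_cont⟩, f₀_comp, f₀_nonneg, f₀_one⟩ :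
      ∃ f₀ : C(G, ℝ), HasCompactSupport f₀ ∧ 0 ≤ f₀ ∧ f₀ 1 ≠ 0 :=
    exists_continuous_nonneg_pos 1
  have c_pos : 0 < ∫ x, f₀ x ∂μ :=
    f₀_cont.integral_pos_of_hasCompactSupport_nonneg_nonzero f₀_comp f₀_nonneg f₀_one
  set F : G → ℝ := fun g => ∫ x, f₀ (x * g) ∂μ with hF
  have F_cont : Continuous F := continuous_integral_mul_right_aux μ f₀_cont f₀_comp
  have F_eq : ∀ g, F g = D g * ∫ x, f₀ x ∂μ := fun g => key g f₀_cont f₀_comp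
  have F_pos : ∀ g, 0 < F g := fun g => by
    rw [F_eq g]; exact mul_pos (D_pos g) c_pos
  have F_mul : ∀ a b : G, F (a * b) = D a * F b := by
    intro a b
    have hcb : Continuous (fun y => f₀ (y * b)) := f₀_cont.comp (continuous_mul_right b)
    have hsb : HasCompactSupport (fun y => f₀ (y * b)) :=
      f₀_comp.comp_homeomorph (Homeomorph.mulRight b)
    have : ∫ x, f₀ (x * (a * b)) ∂μ = ∫ x, (fun y => f₀ (y * b)) (x * a) ∂μ := by
      simp_rw [← mul_assoc]
    rw [hF]; simp only []
    rw [this, key a hcb hsb]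
  -- averaging over H
  have hint : Integrable (fun s : H => F (s : G)) ν :=
    (F_cont.comp continuous_subtype_val).integrable_of_hasCompactSupport
      (HasCompactSupport.of_compactSpace _)
  have I_pos : 0 < ∫ s : H, F (s : G) ∂ν := by
    apply (integral_pos_iff_support_of_nonneg (fun s => (F_pos _).le) hint).2
    have : Function.support (fun s : H => F (s : G)) = Set.univ :=
      Set.eq_univ_of_forall fun s => Function.mem_support.2 (F_pos _).ne'
    rw [this]
    simp
  have hDt : D (t : G) = 1 := by
    have h1 : ∫ s : H, F ((t * s : H) : G) ∂ν = ∫ s : H, F (s : G) ∂ν :=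
      integral_mul_left_eq_self (fun s : H => F (s : G)) t
    have h2 : ∀ s : H, F ((t * s : H) : G) = D (t : G) * F (s : G) := by
      intro s
      rw [Subgroup.coe_mul, F_mul]
    simp_rw [h2, integral_const_mul] at h1
    have h3 : D (t : G) * ∫ s : H, F (s : G) ∂ν = 1 * ∫ s : H, F (s : G) ∂ν := by
      rw [one_mul]; exact h1
    exact mul_right_cancel₀ I_pos.ne' h3
  rw [key (t : G) hφ h'φ, hDt, one_mul]

/-- Unimodularity on a compact subgroup (complex version). -/
lemma integral_mul_right_subgroup_complex (μ : Measure G) [μ.IsHaarMeasure]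
    {H : Subgroup G} [CompactSpace H]
    (ν : Measure H) [ν.IsHaarMeasure] [IsProbabilityMeasure ν] (t : H)
    {φ : G → ℂ} (hφ : Continuous φ) (h'φ : HasCompactSupport φ) :
    ∫ x, φ (x * (t : G)) ∂μ = ∫ x, φ x ∂μ := by
  have i1 : Integrable (fun x => φ (x * (t : G))) μ :=
    (hφ.comp (continuous_mul_right _)).integrable_of_hasCompactSupport
      (h'φ.comp_homeomorph (Homeomorph.mulRight (t : G)))
  have i2 : Integrable φ μ := hφ.integrable_of_hasCompactSupport h'φ
  have hre := integral_mul_right_subgroup μ ν t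
    (φ := fun x => (φ x).re) (Complex.continuous_re.comp hφ)
    (h'φ.comp_left (g := Complex.re) rfl)
  have him := integral_mul_right_subgroup μ ν t
    (φ := fun x => (φ x).im) (Complex.continuous_im.comp hφ)
    (h'φ.comp_left (g := Complex.im) rfl)
  apply Complex.ext
  · have e1 := Complex.reCLM.integral_comp_comm i1
    have e2 := Complex.reCLM.integral_comp_comm i2
    simp only [Complex.reCLM_apply] at e1 e2
    rw [← e1, ← e2]; exact hre
  · have e1 := Complex.imCLM.integral_comp_comm i1
    have e2 := Complex.imCLM.integral_comp_comm i2
    simp only [Complex.imCLM_apply] at e1 e2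
    rw [← e1, ← e2]; exact him

end Aux

section TxiAux

variable {G : Type*} [Group G] [TopologicalSpace G] [IsTopologicalGroup G]
    [LocallyCompactSpace G] [T2Space G] [MeasurableSpace G] [BorelSpace G]
    {H : Subgroup G} [CompactSpace H]

/-- `Txi` of a continuous compactly supported function is continuous. -/
lemma Txi_continuous (ν : Measure H) [IsFiniteMeasure ν] (ξ : H →* Circle) (hξ : Continuous ξ)
    {f : G → ℂ} (hf : Continuous f) : Continuous (Txi ν ξ f) := by
  haveI : BorelSpace H := Subtype.borelSpace (H : Set G)
  rw [← continuousOn_univ]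
  apply continuousOn_integral_of_compact_support (k := (Set.univ : Set H)) isCompact_univ
  · apply Continuous.continuousOn
    apply Continuous.mul
    · exact hf.comp (continuous_fst.mul (continuous_subtype_val.comp continuous_snd))
    · exact Complex.continuous_conj.comp
        ((continuous_subtype_val.comp hξ).comp continuous_snd)
  · intro p x _ hx
    exact absurd (Set.mem_univ x) hx

/-- `Txi` of a compactly supported function is compactly supported. -/
lemma Txi_hasCompactSupport (ν : Measure H) (ξ : H →* Circle)
    {f : G → ℂ} (hfc : HasCompactSupport f) : HasCompactSupport (Txi ν ξ f) := by
  have hK : IsCompact (tsupport f * (Set.range ((↑) : H → G))⁻¹) :=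
    hfc.mul (isCompact_range continuous_subtype_val).inv
  apply HasCompactSupport.intro hK
  intro x hx
  have hzero : ∀ s : H, f (x * (s : G)) = 0 := by
    intro s
    by_contra h
    exact hx ⟨x * (s : G), subset_tsupport _ h, (s : G)⁻¹,
      Set.inv_mem_inv.2 ⟨s, rfl⟩, by simp⟩
  simp only [Txi, hzero, zero_mul, integral_zero]

/-- Covariance of `Txi`: `Txi f (x t) = ξ t * Txi f x` for `t ∈ H`. -/
lemma Txi_covariant (ν : Measure H) [ν.IsMulLeftInvariant] (ξ : H →* Circle) (f : G → ℂ)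
    (t : H) (x : G) :
    Txi ν ξ f (x * (t : G)) = (ξ t : ℂ) * Txi ν ξ f x := by
  haveI : BorelSpace H := Subtype.borelSpace (H : Set G)
  have hone : (ξ t : ℂ) * (starRingEnd ℂ) ((ξ t : ℂ)) = 1 := by
    rw [Complex.mul_conj, Circle.normSq_coe, Complex.ofReal_one]
  have key : ∀ s : H, f ((x * (t : G)) * (s : G)) * (starRingEnd ℂ) ((ξ s : ℂ))
      = (ξ t : ℂ) * (f (x * ((t * s : H) : G)) * (starRingEnd ℂ) ((ξ (t * s) : ℂ))) := by
    intro s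
    rw [Subgroup.coe_mul, map_mul, Circle.coe_mul, map_mul]
    simp only [← mul_assoc]
    linear_combination (-(f (x * (t : G) * (s : G)) * (starRingEnd ℂ) ((ξ s : ℂ)))) * hone
  calc Txi ν ξ f (x * (t : G))
      = ∫ s : H, (ξ t : ℂ) * (f (x * ((t * s : H) : G))
          * (starRingEnd ℂ) ((ξ (t * s) : ℂ))) ∂ν := by
        unfold Txi; exact integral_congr_ae (Filter.Eventually.of_forall key)
    _ = (ξ t : ℂ) * ∫ s : H, f (x * ((t * s : H) : G))
          * (starRingEnd ℂ) ((ξ (t * s) : ℂ)) ∂ν := integral_const_mul _ _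
    _ = (ξ t : ℂ) * Txi ν ξ f x := by
        congr 1
        exact integral_mul_left_eq_self
          (fun s : H => f (x * (s : G)) * (starRingEnd ℂ) ((ξ s : ℂ))) t

end TxiAux

/-- `T_ξ` is formally self-adjoint for the pairing
`⟨u, v⟩ = ∫_G u x * conj (v x) dλ_G` on `C_c(G)`. -/
theorem Txi_formally_selfadjoint {G : Type*} [Group G] [TopologicalSpace G] [IsTopologicalGroup G]
    [LocallyCompactSpace G] [T2Space G] [MeasurableSpace G] [BorelSpace G]
    {H : Subgroup G} [CompactSpace H]
    (ν : Measure H) [ν.IsHaarMeasure] [IsProbabilityMeasure ν]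
    (ξ : H →* Circle) (hξ : Continuous ξ)
    (μ : Measure G) [μ.IsHaarMeasure]
    (f g : G → ℂ) (hf : Continuous f) (hfc : HasCompactSupport f)
    (hg : Continuous g) (hgc : HasCompactSupport g) :
    ∫ x, Txi ν ξ f x * (starRingEnd ℂ) (g x) ∂μ
      = ∫ x, f x * (starRingEnd ℂ) (Txi ν ξ g x) ∂μ := by
  haveI : BorelSpace H := Subtype.borelSpace (H : Set G)
  set Tf := Txi ν ξ f with hTf
  set Tg := Txi ν ξ g with hTg
  have hTf_cont : Continuous Tf := Txi_continuous ν ξ hξ hf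
  have hTg_cont : Continuous Tg := Txi_continuous ν ξ hξ hg
  have hTf_supp : HasCompactSupport Tf := Txi_hasCompactSupport ν ξ hfc
  have hTg_supp : HasCompactSupport Tg := Txi_hasCompactSupport ν ξ hgc
  have hξℂ : Continuous (fun s : H => (ξ s : ℂ)) := continuous_subtype_val.comp hξ
  have hconj1 : ∀ t : H, ((ξ t⁻¹ : Circle) : ℂ) = (starRingEnd ℂ) ((ξ t : ℂ)) := by
    intro t; rw [map_inv]; exact Circle.coe_inv_eq_conj _
  have hone : ∀ t : H, (starRingEnd ℂ) ((ξ t : ℂ)) * (ξ t : ℂ) = 1 := by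
    intro t; rw [mul_comm, Complex.mul_conj, Circle.normSq_coe, Complex.ofReal_one]
  -- pair1 : ⟨Tf, Tg⟩ = ⟨Tf, g⟩
  have pair1 : ∫ x, Tf x * (starRingEnd ℂ) (Tg x) ∂μ
      = ∫ x, Tf x * (starRingEnd ℂ) (g x) ∂μ := by
    set P := ∫ x, Tf x * (starRingEnd ℂ) (g x) ∂μ with hP
    calc ∫ x, Tf x * (starRingEnd ℂ) (Tg x) ∂μ
        = ∫ x, ∫ t : H, Tf x * ((starRingEnd ℂ) (g (x * (t : G))) * (ξ t : ℂ)) ∂ν ∂μ := by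
          congr 1 with x
          rw [show (starRingEnd ℂ) (Tg x)
              = ∫ t : H, (starRingEnd ℂ) (g (x * (t : G))) * (ξ t : ℂ) ∂ν from ?_,
            ← integral_const_mul]
          rw [hTg]
          unfold Txi
          rw [← integral_conj]
          congr 1 with t
          rw [map_mul, Complex.conj_conj]
      _ = ∫ t : H, ∫ x, Tf x * ((starRingEnd ℂ) (g (x * (t : G))) * (ξ t : ℂ)) ∂μ ∂ν := by
          apply integral_integral_swap_of_hasCompactSupport
          · apply Continuous.mul (hTf_cont.comp continuous_fst)
            apply Continuous.mul
            · exact Complex.continuous_conj.comp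
                (hg.comp (continuous_fst.mul (continuous_subtype_val.comp continuous_snd)))
            · exact hξℂ.comp continuous_snd
          · apply HasCompactSupport.intro (hTf_supp.prod isCompact_univ)
            rintro ⟨x, t⟩ hxt
            have : x ∉ tsupport Tf := by
              simp only [Set.mem_prod, Set.mem_univ, and_true] at hxt
              exact hxt
            simp [image_eq_zero_of_notMem_tsupport this]
      _ = ∫ t : H, ((starRingEnd ℂ) ((ξ t : ℂ)) * P) * (ξ t : ℂ) ∂ν := by
          congr 1 with t
          have step : ∫ x, Tf x * (starRingEnd ℂ) (g (x * (t : G))) ∂μ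
              = (starRingEnd ℂ) ((ξ t : ℂ)) * P := by
            have hψc : Continuous (fun x => Tf (x * (t : G)⁻¹) * (starRingEnd ℂ) (g x)) :=
              (hTf_cont.comp (continuous_mul_right _)).mul (Complex.continuous_conj.comp hg)
            have hψs : HasCompactSupport
                (fun x => Tf (x * (t : G)⁻¹) * (starRingEnd ℂ) (g x)) :=
              HasCompactSupport.mul_left (hgc.comp_left (g := starRingEnd ℂ) (map_zero _))
            have htr := integral_mul_right_subgroup_complex μ ν t hψc hψs
            simp only [mul_inv_cancel_right] at htr
            rw [htr]
            have hcov : ∀ x, Tf (x * (t : G)⁻¹) = (starRingEnd ℂ) ((ξ t : ℂ)) * Tf x := by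
              intro x
              have : ((t⁻¹ : H) : G) = (t : G)⁻¹ := rfl
              rw [← this, hTf, Txi_covariant ν ξ f t⁻¹ x, hconj1]
            simp_rw [hcov, mul_assoc]
            rw [integral_const_mul]
          rw [show (fun x => Tf x * ((starRingEnd ℂ) (g (x * (t : G))) * (ξ t : ℂ)))
              = fun x => (Tf x * (starRingEnd ℂ) (g (x * (t : G)))) * (ξ t : ℂ) from
                funext fun x => by ring, integral_mul_const, step]
      _ = ∫ _t : H, P ∂ν := by
          congr 1 with t
          calc ((starRingEnd ℂ) ((ξ t : ℂ)) * P) * (ξ t : ℂ)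
              = ((starRingEnd ℂ) ((ξ t : ℂ)) * (ξ t : ℂ)) * P := by ring
            _ = P := by rw [hone t, one_mul]
      _ = P := by simp
  -- pair2 : ⟨Tf, Tg⟩ = ⟨f, Tg⟩
  have pair2 : ∫ x, Tf x * (starRingEnd ℂ) (Tg x) ∂μ
      = ∫ x, f x * (starRingEnd ℂ) (Tg x) ∂μ := by
    set Q := ∫ x, f x * (starRingEnd ℂ) (Tg x) ∂μ with hQ
    calc ∫ x, Tf x * (starRingEnd ℂ) (Tg x) ∂μ
        = ∫ x, ∫ s : H, f (x * (s : G)) * (starRingEnd ℂ) ((ξ s : ℂ))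
            * (starRingEnd ℂ) (Tg x) ∂ν ∂μ := by
          congr 1 with x
          rw [hTf]
          unfold Txi
          rw [← integral_mul_const]
      _ = ∫ s : H, ∫ x, f (x * (s : G)) * (starRingEnd ℂ) ((ξ s : ℂ))
            * (starRingEnd ℂ) (Tg x) ∂μ ∂ν := by
          apply integral_integral_swap_of_hasCompactSupport
          · apply Continuous.mul
            apply Continuous.mul
            · exact hf.comp (continuous_fst.mul (continuous_subtype_val.comp continuous_snd))
            · exact Complex.continuous_conj.comp (hξℂ.comp continuous_snd)
            · exact Complex.continuous_conj.comp (hTg_cont.comp continuous_fst)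
          · apply HasCompactSupport.intro ((hTg_supp.prod isCompact_univ))
            rintro ⟨x, s⟩ hxs
            have : x ∉ tsupport Tg := by
              simp only [Set.mem_prod, Set.mem_univ, and_true] at hxs
              exact hxs
            simp [image_eq_zero_of_notMem_tsupport this]
      _ = ∫ s : H, ((starRingEnd ℂ) ((ξ s : ℂ))) * ((ξ s : ℂ) * Q) ∂ν := by
          congr 1 with s
          have step : ∫ x, f (x * (s : G)) * (starRingEnd ℂ) (Tg x) ∂μ
              = (ξ s : ℂ) * Q := by
            have hψc : Continuous (fun x => f x * (starRingEnd ℂ) (Tg (x * (s : G)⁻¹))) :=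
              hf.mul (Complex.continuous_conj.comp (hTg_cont.comp (continuous_mul_right _)))
            have hψs : HasCompactSupport
                (fun x => f x * (starRingEnd ℂ) (Tg (x * (s : G)⁻¹))) :=
              hfc.mul_right
            have htr := integral_mul_right_subgroup_complex μ ν s hψc hψs
            simp only [mul_inv_cancel_right] at htr
            rw [htr]
            have hcov : ∀ x, (starRingEnd ℂ) (Tg (x * (s : G)⁻¹))
                = (ξ s : ℂ) * (starRingEnd ℂ) (Tg x) := by
              intro x
              have h0 : ((s⁻¹ : H) : G) = (s : G)⁻¹ := rfl
              rw [← h0, hTg, Txi_covariant ν ξ g s⁻¹ x, map_mul, hconj1, Complex.conj_conj]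
            simp_rw [hcov]
            rw [show (fun x => f x * ((ξ s : ℂ) * (starRingEnd ℂ) (Tg x)))
                = fun x => (ξ s : ℂ) * (f x * (starRingEnd ℂ) (Tg x)) from
                  funext fun x => by ring, integral_const_mul]
          rw [show (fun x => f (x * (s : G)) * (starRingEnd ℂ) ((ξ s : ℂ))
              * (starRingEnd ℂ) (Tg x))
              = fun x => (starRingEnd ℂ) ((ξ s : ℂ))
                * (f (x * (s : G)) * (starRingEnd ℂ) (Tg x)) from
                funext fun x => by ring, integral_const_mul, step]
      _ = ∫ _s : H, Q ∂ν := by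
          congr 1 with s
          rw [← mul_assoc, hone s, one_mul]
      _ = Q := by simp
  rw [← pair1, pair2]
end

section
/- Let λ_H be the probability Haar measure on the compact subgroup H, 1 ≤ p < ∞, and ψ ∈ M_ξ(G,H) (a continuous compactly supported function satisfying ψ(xh) = ξ(h)ψ(x)). Then ‖ψ‖_{L^p(G)} = inf { ‖f‖_{L^p(G)} : f ∈ C_c(G), T_ξ(f) = ψ }. -/
open MeasureTheory Complex
open scoped ENNReal

open Pointwise
open scoped NNReal

set_option linter.unusedSectionVars false

section Aux
variable {G : Type*} [Group G] [TopologicalSpace G] [IsTopologicalGroup G]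
    [LocallyCompactSpace G] [T2Space G] [MeasurableSpace G] [BorelSpace G]

/-- The modular scaling factor of right translation by `t`. -/
noncomputable def myD (μ : Measure G) [μ.IsHaarMeasure] (t : G) : ℝ≥0 :=
  Measure.haarScalarFactor (Measure.map (· * t) μ) μ

lemma myD_spec (μ : Measure G) [μ.IsHaarMeasure] (t : G) {g : G → ℝ}
    (hg : Continuous g) (hgc : HasCompactSupport g) :
    ∫ x, g (x * t) ∂μ = (myD μ t : ℝ) * ∫ x, g x ∂μ := by
  have h1 : ∫ x, g (x * t) ∂μ = ∫ y, g y ∂(Measure.map (· * t) μ) :=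
    (integral_map (measurable_mul_const t).aemeasurable hg.aestronglyMeasurable).symm
  rw [h1, Measure.integral_isMulLeftInvariant_eq_smul_of_hasCompactSupport _ μ hg hgc]
  rw [integral_smul_nnreal_measure]
  rfl

lemma myD_one (μ : Measure G) [μ.IsHaarMeasure] : myD μ 1 = 1 := by
  have : (· * (1 : G)) = id := by funext x; simp
  simp [myD, this, Measure.map_id, Measure.haarScalarFactor_self]

lemma myD_mul (μ : Measure G) [μ.IsHaarMeasure] (t u : G) :
    myD μ (t * u) = myD μ t * myD μ u := by
  obtain ⟨⟨g, g_cont⟩, g_comp, g_nonneg, g_one⟩ :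
    ∃ g : C(G, ℝ), HasCompactSupport g ∧ 0 ≤ g ∧ g 1 ≠ 0 := exists_continuous_nonneg_pos 1
  have int_g_ne_zero : ∫ x, g x ∂μ ≠ 0 :=
    ne_of_gt (g_cont.integral_pos_of_hasCompactSupport_nonneg_nonzero g_comp g_nonneg g_one)
  have g1_cont : Continuous (fun x => g (x * u)) := g_cont.comp (continuous_mul_right u)
  have g1_comp : HasCompactSupport (fun x => g (x * u)) :=
    g_comp.comp_homeomorph (Homeomorph.mulRight u)
  have e1 : ∫ x, g (x * (t * u)) ∂μ = (myD μ (t * u) : ℝ) * ∫ x, g x ∂μ :=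
    myD_spec μ (t * u) g_cont g_comp
  have e2 : ∫ x, g (x * (t * u)) ∂μ = (myD μ t : ℝ) * ((myD μ u : ℝ) * ∫ x, g x ∂μ) := by
    have : ∀ x : G, g (x * (t * u)) = (fun y => g (y * u)) (x * t) := by
      intro x; simp [mul_assoc]
    simp_rw [this]
    rw [myD_spec μ t g1_cont g1_comp, myD_spec μ u g_cont g_comp]
  apply NNReal.coe_injective
  push_cast
  have h := e1.symm.trans e2
  rw [← mul_assoc] at h
  exact mul_right_cancel₀ int_g_ne_zero h

lemma myD_coe_pow (μ : Measure G) [μ.IsHaarMeasure] (t : G) (n : ℕ) :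
    myD μ (t ^ n) = myD μ t ^ n := by
  induction n with
  | zero => simpa using myD_one μ
  | succ n ih => rw [pow_succ, pow_succ, myD_mul, ih]

lemma myD_eq_one_of_mem_compact (μ : Measure G) [μ.IsHaarMeasure]
    {H : Subgroup G} [CompactSpace H] (s : H) : myD μ (s : G) = 1 := by
  -- uniform bound on H
  obtain ⟨⟨g, g_cont⟩, g_comp, g_nonneg, g_one⟩ :
    ∃ g : C(G, ℝ), HasCompactSupport g ∧ 0 ≤ g ∧ g 1 ≠ 0 := exists_continuous_nonneg_pos 1
  have int_g_pos : 0 < ∫ x, g x ∂μ :=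
    g_cont.integral_pos_of_hasCompactSupport_nonneg_nonzero g_comp g_nonneg g_one
  have hHc : IsCompact (H : Set G) := isCompact_iff_compactSpace.mpr ‹_›
  have hK2 : IsCompact (tsupport g * (H : Set G)) := g_comp.mul hHc
  obtain ⟨C, hC⟩ : ∃ C, ∀ x, ‖g x‖ ≤ C := g_cont.bounded_above_of_compact_support g_comp
  obtain ⟨K2, hK2def⟩ : ∃ K2 : Set G, K2 = tsupport g * (H : Set G) := ⟨_, rfl⟩
  rw [← hK2def] at hK2
  have hK2meas : MeasurableSet K2 := hK2.isClosed.measurableSet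
  set B : ℝ := C * (μ K2).toReal with hBdef
  have key : ∀ s : H, (myD μ (s : G) : ℝ) * ∫ x, g x ∂μ ≤ B := by
    intro s
    rw [← myD_spec μ (s : G) g_cont g_comp]
    have hind : Integrable (K2.indicator (fun _ => C)) μ := by
      rw [integrable_indicator_iff hK2meas]
      exact integrableOn_const hK2.measure_lt_top.ne
    have hle : ∀ x, g (x * (s : G)) ≤ K2.indicator (fun _ => C) x := by
      intro x
      by_cases hx : x ∈ K2
      · rw [Set.indicator_of_mem hx]
        exact (le_abs_self _).trans (hC _)
      · rw [Set.indicator_of_notMem hx]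
        by_contra hcon
        push_neg at hcon
        have hne : g (x * (s : G)) ≠ 0 := by
          intro h0; rw [h0] at hcon; exact lt_irrefl 0 hcon
        have : x * (s : G) ∈ tsupport g := subset_tsupport g hne
        have : x ∈ K2 := by
          have : x = (x * (s : G)) * ((s⁻¹ : H) : G) := by simp
          rw [this]
          rw [hK2def]
          exact Set.mul_mem_mul ‹x * (s:G) ∈ tsupport g› (s⁻¹ : H).2
        exact hx this
    calc ∫ x, g (x * (s : G)) ∂μ ≤ ∫ x, K2.indicator (fun _ => C) x ∂μ :=
          integral_mono_of_nonneg (Filter.Eventually.of_forall fun x => g_nonneg _)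
            hind (Filter.Eventually.of_forall hle)
      _ = (μ K2).toReal • C := integral_indicator_const C hK2meas
      _ = B := by rw [hBdef, smul_eq_mul, mul_comm]
  have hle1 : ∀ s : H, (myD μ (s : G) : ℝ) ≤ 1 := by
    intro s
    by_contra hcon
    push_neg at hcon
    obtain ⟨n, hn⟩ := pow_unbounded_of_one_lt (B / ∫ x, g x ∂μ) hcon
    have h1 : (myD μ ((s : G) ^ n) : ℝ) = (myD μ (s : G) : ℝ) ^ n := by
      rw [myD_coe_pow]; push_cast; ring
    have h2 := key (s ^ n)
    rw [SubmonoidClass.coe_pow] at h2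
    rw [h1] at h2
    have : (myD μ (s:G) : ℝ) ^ n ≤ B / ∫ x, g x ∂μ := by
      rw [le_div_iff₀ int_g_pos]; exact h2
    exact absurd this (not_le.mpr hn)
  have hprod : (myD μ (s : G) : ℝ) * (myD μ ((s⁻¹ : H) : G) : ℝ) = 1 := by
    have h := myD_mul μ (s : G) ((s⁻¹ : H) : G)
    rw [show (s : G) * ((s⁻¹ : H) : G) = 1 by simp, myD_one] at h
    exact_mod_cast h.symm
  have h1 : (myD μ (s : G) : ℝ) ≤ 1 := hle1 s
  have h2 : (myD μ ((s⁻¹ : H) : G) : ℝ) ≤ 1 := hle1 s⁻¹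
  have hpos : 0 < (myD μ (s : G) : ℝ) := by
    rcases (myD μ (s : G)).coe_nonneg.lt_or_eq with h | h
    · exact h
    · exfalso; rw [← h] at hprod; simp at hprod
  apply NNReal.coe_injective
  push_cast
  nlinarith [hprod, h1, h2, (myD μ ((s⁻¹ : H) : G)).coe_nonneg]

/-- Right-translation by an element of a compact subgroup preserves integrals of
continuous compactly supported functions against a left Haar measure. -/
lemma integral_mul_right_of_mem_compact (μ : Measure G) [μ.IsHaarMeasure]
    {H : Subgroup G} [CompactSpace H] (s : H) {g : G → ℝ}
    (hg : Continuous g) (hgc : HasCompactSupport g) :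
    ∫ x, g (x * (s : G)) ∂μ = ∫ x, g x ∂μ := by
  rw [myD_spec μ (s : G) hg hgc, myD_eq_one_of_mem_compact]
  simp

end Aux

/-- for `ψ ∈ M_ξ(G,H)` (continuous, compactly supported and covariant),
`‖ψ‖_{L^p(G)} = inf { ‖f‖_{L^p(G)} : f ∈ C_c(G), T_ξ f = ψ }`. -/
theorem Txi_norm_inf {G : Type*} [Group G] [TopologicalSpace G] [IsTopologicalGroup G]
    [LocallyCompactSpace G] [T2Space G] [MeasurableSpace G] [BorelSpace G]
    {H : Subgroup G} [CompactSpace H]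
    (ν : Measure H) [ν.IsHaarMeasure] [IsProbabilityMeasure ν]
    (ξ : H →* Circle) (hξ : Continuous ξ)
    (μ : Measure G) [μ.IsHaarMeasure]
    (p : ℝ≥0∞) (hp1 : 1 ≤ p) (hp2 : p ≠ ⊤)
    (ψ : G → ℂ) (hψ : Continuous ψ) (hψc : HasCompactSupport ψ)
    (hcov : ∀ (x : G) (h : H), ψ (x * (h : G)) = (ξ h : ℂ) * ψ x) :
    eLpNorm ψ p μ
      = sInf ((fun f => eLpNorm f p μ) ''
          {f : G → ℂ | Continuous f ∧ HasCompactSupport f ∧ Txi ν ξ f = ψ}) := by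
  classical
  haveI : BorelSpace H := Subtype.borelSpace (H : Set G)
  have hp0 : p ≠ 0 := (zero_lt_one.trans_le hp1).ne'
  have hq1 : (1:ℝ) ≤ p.toReal := by simpa using ENNReal.toReal_mono hp2 hp1
  have hq0 : (0:ℝ) < p.toReal := zero_lt_one.trans_le hq1
  set q := p.toReal with hqdef
  have hTψ : Txi ν ξ ψ = ψ := by
    funext x
    have hconst : ∀ s : H, ψ (x * (s : G)) * (starRingEnd ℂ) ((ξ s : ℂ)) = ψ x := by
      intro s
      rw [hcov]
      have h1 : (ξ s : ℂ) * (starRingEnd ℂ) ((ξ s : ℂ)) = 1 := by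
        simp [Complex.mul_conj]
      calc (ξ s : ℂ) * ψ x * (starRingEnd ℂ) ((ξ s : ℂ))
          = ((ξ s : ℂ) * (starRingEnd ℂ) ((ξ s : ℂ))) * ψ x := by ring
        _ = ψ x := by rw [h1, one_mul]
    simp only [Txi]
    simp_rw [hconst]
    simp
  refine le_antisymm (le_sInf ?_) (sInf_le ⟨ψ, ⟨hψ, hψc, hTψ⟩, rfl⟩)
  rintro b ⟨f, ⟨hf, hfc, hTf⟩, rfl⟩
  show eLpNorm ψ p μ ≤ eLpNorm f p μ
  set h : G → ℝ := fun x => ‖f x‖ ^ q with hhdef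
  have h_cont : Continuous h := (hf.norm).rpow_const (fun x => Or.inr hq0.le)
  have h_supp : HasCompactSupport h :=
    hfc.norm.comp_left (g := fun r : ℝ => r ^ q) (Real.zero_rpow hq0.ne')
  have hHcomp : IsCompact (H : Set G) := isCompact_iff_compactSpace.mpr ‹_›
  have hK : IsCompact (tsupport h * (H : Set G)) := h_supp.mul hHcomp
  have slice_cont : ∀ x : G, Continuous (fun s : H => h (x * (s : G))) := fun x =>
    h_cont.comp ((continuous_mul_left x).comp continuous_subtype_val)
  have key : ∀ x : G, (‖ψ x‖₊ : ℝ≥0∞) ^ q ≤ ∫⁻ s : H, (‖f (x * (s:G))‖₊ : ℝ≥0∞) ^ q ∂ν := by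
    intro x
    set u : H → ℂ := fun s => f (x * (s : G)) * (starRingEnd ℂ) ((ξ s : ℂ)) with hudef
    have hu_cont : Continuous u := by
      apply Continuous.mul
      · exact hf.comp ((continuous_mul_left x).comp continuous_subtype_val)
      · exact Complex.continuous_conj.comp (continuous_subtype_val.comp hξ)
    have hψx : ψ x = ∫ s, u s ∂ν := by rw [← hTf]; rfl
    have h2 : (‖ψ x‖₊ : ℝ≥0∞) ≤ ∫⁻ s, ‖u s‖₊ ∂ν := by
      rw [hψx]; exact enorm_integral_le_lintegral_enorm u
    have h3 : (∫⁻ s, (‖u s‖₊ : ℝ≥0∞) ∂ν) = eLpNorm u 1 ν :=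
      by simp only [eLpNorm_one_eq_lintegral_enorm, enorm_eq_nnnorm]
    have h4 : eLpNorm u 1 ν ≤ eLpNorm u p ν :=
      eLpNorm_le_eLpNorm_of_exponent_le hp1 hu_cont.aestronglyMeasurable
    have h5 : eLpNorm u p ν = (∫⁻ s, (‖u s‖₊ : ℝ≥0∞) ^ q ∂ν) ^ (1/q) :=
      eLpNorm_eq_lintegral_rpow_enorm_toReal hp0 hp2
    have h6 : (‖ψ x‖₊ : ℝ≥0∞) ≤ (∫⁻ s, (‖u s‖₊ : ℝ≥0∞) ^ q ∂ν) ^ (1/q) :=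
      (h2.trans (h3.le.trans h4)).trans h5.le
    have h7 := ENNReal.rpow_le_rpow h6 hq0.le
    rw [← ENNReal.rpow_mul, one_div_mul_cancel hq0.ne', ENNReal.rpow_one] at h7
    refine h7.trans (le_of_eq (lintegral_congr fun s => ?_))
    have h8 : ‖u s‖₊ = ‖f (x * (s:G))‖₊ := by
      have h9 : ‖((ξ s : Circle) : ℂ)‖₊ = 1 := by
        apply NNReal.coe_injective
        simp [Circle.norm_coe]
      simp [hudef, nnnorm_mul, h9]
    rw [h8]
  have Fcont : Continuous (Function.uncurry fun (x : G) (s : H) => h (x * (s:G))) :=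
    h_cont.comp (continuous_fst.mul (continuous_subtype_val.comp continuous_snd))
  have Fsupp : HasCompactSupport (Function.uncurry fun (x : G) (s : H) => h (x * (s:G))) := by
    apply HasCompactSupport.intro (hK.prod isCompact_univ)
    rintro ⟨x, s⟩ hxs
    simp only [Set.mem_prod, Set.mem_univ, and_true] at hxs
    show h (x * (s:G)) = 0
    by_contra h0
    apply hxs
    have hmem : x * (s:G) ∈ tsupport h := subset_tsupport h h0
    have hx2 : x = (x * (s:G)) * ((s⁻¹ : H) : G) := by simp
    rw [hx2]
    exact Set.mul_mem_mul hmem (s⁻¹ : H).2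
  set Φ : G → ℝ := fun x => ∫ s : H, h (x * (s:G)) ∂ν with hΦdef
  have Φ_nonneg : ∀ x, 0 ≤ Φ x := fun x =>
    integral_nonneg fun s => Real.rpow_nonneg (norm_nonneg _) q
  have slice_int : ∀ x : G, Integrable (fun s : H => h (x * (s:G))) ν := fun x =>
    (slice_cont x).integrable_of_hasCompactSupport (isClosed_tsupport _).isCompact
  obtain ⟨C, hC⟩ : ∃ C, ∀ x, ‖h x‖ ≤ C := h_cont.bounded_above_of_compact_support h_supp
  have Φ_meas : AEStronglyMeasurable Φ μ :=
    ((Fsupp.stronglyMeasurable_of_prod Fcont).integral_prod_right').aestronglyMeasurable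
  have Φ_zero : ∀ x ∉ tsupport h * (H : Set G), Φ x = 0 := by
    intro x hx
    have hz : ∀ s : H, h (x * (s:G)) = 0 := by
      intro s
      by_contra h0
      apply hx
      have hmem : x * (s:G) ∈ tsupport h := subset_tsupport h h0
      have hx2 : x = (x * (s:G)) * ((s⁻¹ : H) : G) := by simp
      rw [hx2]
      exact Set.mul_mem_mul hmem (s⁻¹ : H).2
    simp only [hΦdef]
    simp [hz]
  have Φ_int : Integrable Φ μ := by
    refine Integrable.mono'
      (g := (tsupport h * (H : Set G)).indicator fun _ => C) ?_ Φ_meas ?_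
    · rw [integrable_indicator_iff hK.isClosed.measurableSet]
      exact integrableOn_const hK.measure_lt_top.ne
    · refine Filter.Eventually.of_forall fun x => ?_
      by_cases hx : x ∈ tsupport h * (H : Set G)
      · rw [Set.indicator_of_mem hx]
        calc ‖Φ x‖ ≤ ∫ s : H, ‖h (x * (s:G))‖ ∂ν := norm_integral_le_integral_norm _
          _ ≤ ∫ _ : H, C ∂ν := integral_mono_of_nonneg
                (Filter.Eventually.of_forall fun s => norm_nonneg _)
                (integrable_const C)
                (Filter.Eventually.of_forall fun s => hC _)
          _ = C := by simp
      · rw [Set.indicator_of_notMem hx, Φ_zero x hx]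
        simp
  have fub : ∫ x, Φ x ∂μ = ∫ x, h x ∂μ := by
    have hswap := integral_integral_swap_of_hasCompactSupport Fcont Fsupp (μ := μ) (ν := ν)
    have inner : ∀ s : H, ∫ x, h (x * (s:G)) ∂μ = ∫ x, h x ∂μ := fun s =>
      integral_mul_right_of_mem_compact μ s h_cont h_supp
    calc ∫ x, Φ x ∂μ = ∫ (s : H), ∫ x, h (x * (s:G)) ∂μ ∂ν := hswap
      _ = ∫ (_ : H), ∫ x, h x ∂μ ∂ν := by simp_rw [inner]
      _ = ∫ x, h x ∂μ := by simp
  have conv1 : ∀ x, ∫⁻ s : H, (‖f (x*(s:G))‖₊ : ℝ≥0∞) ^ q ∂ν = ENNReal.ofReal (Φ x) := by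
    intro x
    rw [hΦdef]
    rw [ofReal_integral_eq_lintegral_ofReal (slice_int x)
      (Filter.Eventually.of_forall fun s => Real.rpow_nonneg (norm_nonneg _) q)]
    refine lintegral_congr fun s => ?_
    rw [hhdef]
    rw [← ENNReal.ofReal_rpow_of_nonneg (norm_nonneg _) hq0.le, ofReal_norm, enorm_eq_nnnorm]
  have conv2 : ENNReal.ofReal (∫ x, h x ∂μ) = ∫⁻ x, (‖f x‖₊ : ℝ≥0∞) ^ q ∂μ := by
    rw [ofReal_integral_eq_lintegral_ofReal (h_cont.integrable_of_hasCompactSupport h_supp)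
      (Filter.Eventually.of_forall fun x => Real.rpow_nonneg (norm_nonneg _) q)]
    refine lintegral_congr fun x => ?_
    rw [hhdef]
    rw [← ENNReal.ofReal_rpow_of_nonneg (norm_nonneg _) hq0.le, ofReal_norm, enorm_eq_nnnorm]
  have main : ∫⁻ x, (‖ψ x‖₊ : ℝ≥0∞) ^ q ∂μ ≤ ∫⁻ x, (‖f x‖₊ : ℝ≥0∞) ^ q ∂μ := by
    calc ∫⁻ x, (‖ψ x‖₊ : ℝ≥0∞) ^ q ∂μ
        ≤ ∫⁻ x, ENNReal.ofReal (Φ x) ∂μ :=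
          lintegral_mono fun x => (key x).trans (conv1 x).le
      _ = ENNReal.ofReal (∫ x, Φ x ∂μ) :=
          (ofReal_integral_eq_lintegral_ofReal Φ_int
            (Filter.Eventually.of_forall Φ_nonneg)).symm
      _ = ENNReal.ofReal (∫ x, h x ∂μ) := by rw [fub]
      _ = _ := conv2
  rw [eLpNorm_eq_lintegral_rpow_enorm_toReal hp0 hp2, eLpNorm_eq_lintegral_rpow_enorm_toReal hp0 hp2]
  rw [← hqdef]
  exact ENNReal.rpow_le_rpow main (by positivity)
end
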